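/- If Q is a connected quandle on n > 1 elements with Inn(Q) = A_n (the alternating group on Q), then n = 4. -/

import Mathlib

universe u

/-- A quandle with a *right* self-distributive operation `x ▷ y`, following
Ehrman–Gurpinar–Thibault–Yetter. -/
class RQuandle (Q : Type u) where
  act : Q → Q → Q
  act_self : ∀ x : Q, act x x = x
  act_rinv : ∀ a b : Q, ∃! y, act y a = b
  act_distrib : ∀ a b c : Q, act (act a b) c = act (act a c) (act b c)

infixl:65 " ▷ " => RQuandle.act

namespace RQuandle

variable {Q : Type u} [RQuandle Q]

/-- The inner automorphism `S_y : x ↦ x ▷ y`, as a permutation of `Q`. -/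
noncomputable def SPerm (y : Q) : Equiv.Perm Q :=
  Equiv.ofBijective (fun x => x ▷ y)
    ⟨fun a b h => by
        obtain ⟨c, _, hu⟩ := RQuandle.act_rinv y (b ▷ y)
        exact (hu a h).trans (hu b rfl).symm,
      fun b => (RQuandle.act_rinv y b).exists⟩

@[simp] lemma SPerm_apply (x y : Q) : SPerm y x = x ▷ y := rfl

/-- The inner automorphism group of a quandle: the subgroup of `Equiv.Perm Q`
generated by the maps `S_y`. -/
def Inn (Q : Type u) [RQuandle Q] : Subgroup (Equiv.Perm Q) :=
  Subgroup.closure (Set.range (SPerm : Q → Equiv.Perm Q))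

lemma SPerm_mem_Inn (y : Q) : SPerm y ∈ Inn Q :=
  Subgroup.subset_closure ⟨y, rfl⟩

/-- A quandle is (algebraically) connected when `Inn Q` acts transitively. -/
def Connected (Q : Type u) [RQuandle Q] : Prop :=
  ∀ x y : Q, ∃ p ∈ Inn Q, p x = y

/-- The orbit of `s` under the inner automorphism group. -/
def orbitSet (s : Q) : Set Q := {t | ∃ p ∈ Inn Q, p s = t}

/-- `f` is an automorphism of the quandle `Q`. -/
def IsQAut (f : Equiv.Perm Q) : Prop := ∀ x y : Q, f (x ▷ y) = f x ▷ f y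

/-- Key conjugation identity: in left-to-right (right action) convention this is
`S_{x ▷ y} = S_y⁻¹ S_x S_y`. -/
lemma SPerm_conj (x y : Q) : SPerm (x ▷ y) = SPerm y * SPerm x * (SPerm y)⁻¹ := by
  rw [eq_mul_inv_iff_mul_eq]
  ext u
  simp only [Equiv.Perm.mul_apply, SPerm_apply]
  exact (RQuandle.act_distrib u x y).symm

/-- Relators for the universal augmentation group `Γ_Q`: `|x ▷ y| = |y|⁻¹ |x| |y|`. -/
def augRels (Q : Type u) [RQuandle Q] : Set (FreeGroup Q) :=
  {w | ∃ x y : Q,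
    w = FreeGroup.of (x ▷ y) * ((FreeGroup.of y)⁻¹ * FreeGroup.of x * FreeGroup.of y)⁻¹}

/-- The universal augmentation group `Γ_Q` of a quandle. -/
abbrev Gamma (Q : Type u) [RQuandle Q] := PresentedGroup (augRels Q)

/-- The generator `|x| ∈ Γ_Q`. -/
def gen (x : Q) : Gamma Q := PresentedGroup.of x

/-- The canonical homomorphism `Γ_Q → Aut(Q)` sending `|y|` to `S_y`.  Since the
paper composes automorphisms as right actions, this is a homomorphism into the
opposite of the permutation group. -/
noncomputable def canHom (Q : Type u) [RQuandle Q] : Gamma Q →* (Equiv.Perm Q)ᵐᵒᵖ :=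
  PresentedGroup.toGroup (f := fun y => MulOpposite.op (SPerm y)) (by
    rintro w ⟨x, y, rfl⟩
    simp only [map_mul, map_inv, FreeGroup.lift_apply_of]
    rw [← MulOpposite.op_inv, ← MulOpposite.op_mul, ← MulOpposite.op_mul, SPerm_conj]
    simp [mul_assoc])

@[simp] lemma canHom_gen (y : Q) : canHom Q (gen y) = MulOpposite.op (SPerm y) :=
  PresentedGroup.toGroup.of _

lemma orbit_act_mem {s x : Q} (y : Q) (hx : x ∈ orbitSet s) : x ▷ y ∈ orbitSet s := by
  obtain ⟨p, hp, rfl⟩ := hx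
  exact ⟨SPerm y * p, mul_mem (SPerm_mem_Inn y) hp, rfl⟩

lemma orbit_actinv_mem {s x : Q} (y : Q) (hx : x ∈ orbitSet s) :
    (SPerm y).symm x ∈ orbitSet s := by
  obtain ⟨p, hp, rfl⟩ := hx
  exact ⟨(SPerm y)⁻¹ * p, mul_mem (inv_mem (SPerm_mem_Inn y)) hp, rfl⟩

lemma orbit_mem_iff (t : Q) (y : Q) {u : Q} :
    u ∈ orbitSet t ↔ u ▷ y ∈ orbitSet t := by
  constructor
  · exact fun h => orbit_act_mem y h
  · intro h
    have := orbit_actinv_mem y h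
    rw [← SPerm_apply u y, Equiv.symm_apply_apply] at this
    exact this

/-- Each orbit of `Inn Q` is a subquandle. -/
instance orbitQuandle (s : Q) : RQuandle (orbitSet s) where
  act a b := ⟨a.1 ▷ b.1, orbit_act_mem b.1 a.2⟩
  act_self a := Subtype.ext (RQuandle.act_self a.1)
  act_rinv a b := by
    refine ⟨⟨(SPerm a.1).symm b.1, orbit_actinv_mem a.1 b.2⟩, Subtype.ext ?_, ?_⟩
    · exact (SPerm a.1).apply_symm_apply b.1
    · rintro ⟨z, hz⟩ h
      apply Subtype.ext
      have hz' : z ▷ a.1 = b.1 := congrArg Subtype.val h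
      show z = (SPerm a.1).symm b.1
      rw [← hz']
      exact ((SPerm a.1).symm_apply_apply z).symm
  act_distrib a b c := Subtype.ext (RQuandle.act_distrib a.1 b.1 c.1)

/-- Restriction of `S_x` to the orbit of `t`. -/
noncomputable def phi (t : Q) (x : Q) : Equiv.Perm (orbitSet t) :=
  (SPerm x).subtypePerm (fun u => (orbit_mem_iff t x (u := u)).symm)

/-- The quandle axioms, as a predicate on a binary operation. -/
def IsRQuandleOp {A : Type u} (op : A → A → A) : Prop :=
  (∀ x, op x x = x) ∧ (∀ a b, ∃! y, op y a = b) ∧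
    ∀ a b c, op (op a b) c = op (op a c) (op b c)

end RQuandle


namespace RQuandle

variable {Q : Type u} [RQuandle Q]

lemma SPerm_equivariant : ∀ p ∈ Inn Q, ∀ x : Q, SPerm (p x) = p * SPerm x * p⁻¹ := by
  intro p hp
  induction hp using Subgroup.closure_induction with
  | mem q hq =>
    obtain ⟨y, rfl⟩ := hq
    intro x
    rw [SPerm_apply, SPerm_conj]
  | one => intro x; simp
  | mul q r _ _ hq hr =>
    intro x
    simp only [Equiv.Perm.mul_apply, hq (r x), hr x]
    group
  | inv q _ hq =>
    intro x
    have := hq (q⁻¹ x)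
    rw [show q (q⁻¹ x) = x from q.apply_symm_apply x] at this
    rw [this]
    group

lemma all_SPerm_one_absurd [Fintype Q] (hc : Connected Q) (hn : 1 < Fintype.card Q)
    (h1 : ∀ y : Q, SPerm y = (1 : Equiv.Perm Q)) : False := by
  obtain ⟨x, y, hxy⟩ := Fintype.exists_pair_of_one_lt_card hn
  obtain ⟨p, hp, hpx⟩ := hc x y
  have hbot : Inn Q ≤ ⊥ := by
    rw [Inn, Subgroup.closure_le]
    rintro q ⟨z, rfl⟩
    simp [h1 z]
  have : p = 1 := Subgroup.mem_bot.mp (hbot hp)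
  rw [this] at hpx
  exact hxy hpx

end RQuandle

open RQuandle in
/-- if a connected quandle on `n > 1` elements has
`Inn Q = A_n` (the alternating group on `Q`), then `n = 4`. -/
theorem inn_eq_alternating_imp {Q : Type u} [RQuandle Q] [Fintype Q] [DecidableEq Q]
    (hc : Connected Q) (hn : 1 < Fintype.card Q) (h : Inn Q = alternatingGroup Q) :
    Fintype.card Q = 4 := by
  by_contra hne
  -- any even permutation fixing y commutes with S_y
  have key : ∀ (g : Equiv.Perm Q) (y : Q), g ∈ alternatingGroup Q → g y = y →
      ∀ α, g (SPerm y α) = SPerm y (g α) := by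
    intro g y hg hgy α
    have hgInn : g ∈ Inn Q := h ▸ hg
    have hconj := SPerm_equivariant g hgInn y
    rw [hgy] at hconj
    have hcomm : g * SPerm y = SPerm y * g := by
      nth_rewrite 2 [hconj]
      group
    calc g (SPerm y α) = (g * SPerm y) α := rfl
    _ = (SPerm y * g) α := by rw [hcomm]
    _ = SPerm y (g α) := rfl
  rcases lt_or_gt_of_ne hne with hlt | hgt
  · have h2or3 : Fintype.card Q = 2 ∨ Fintype.card Q = 3 := by omega
    rcases h2or3 with hcard | hcard
    · -- n = 2 : alternating group is trivial
      have hnt : Nontrivial Q := Fintype.one_lt_card_iff_nontrivial.mp hn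
      have h2 : 2 * Fintype.card (alternatingGroup Q) = Fintype.card (Equiv.Perm Q) :=
        two_mul_card_alternatingGroup
      rw [Fintype.card_perm, hcard] at h2
      have hfact : Nat.factorial 2 = 2 := rfl
      have hA1 : Nat.card (alternatingGroup Q) = 1 := by
        rw [Nat.card_eq_fintype_card]; omega
      have hbot : alternatingGroup Q = ⊥ := Subgroup.eq_bot_of_card_eq _ hA1
      obtain ⟨x, y, hxy⟩ := Fintype.exists_pair_of_one_lt_card hn
      obtain ⟨p, hp, hpx⟩ := hc x y
      rw [h, hbot, Subgroup.mem_bot] at hp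
      rw [hp] at hpx
      exact hxy hpx
    · -- n = 3
      refine all_SPerm_one_absurd hc hn ?_
      intro y
      ext α
      simp only [Equiv.Perm.coe_one, id_eq]
      by_contra hne'
      obtain ⟨β, hβ⟩ : ∃ b, SPerm y α = b := ⟨_, rfl⟩
      rw [hβ] at hne'
      have hβα : β ≠ α := fun e => hne' e
      have hSy : SPerm y y = y := act_self y
      have hαy : α ≠ y := by rintro rfl; rw [hSy] at hβ; exact hβα hβ.symm
      have hβy : β ≠ y := fun e =>
        hαy ((SPerm y).injective (hβ.trans (e.trans hSy.symm)))
      have hdist : ({y, α, β} : Finset Q).card = 3 := by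
        rw [Finset.card_insert_of_notMem (by simp [Ne.symm hαy, Ne.symm hβy]),
          Finset.card_insert_of_notMem (by simp [Ne.symm hβα]),
          Finset.card_singleton]
      have huniv : ({y, α, β} : Finset Q) = Finset.univ :=
        Finset.eq_univ_of_card _ (by rw [hdist, hcard])
      have hSβ : SPerm y β = α := by
        have hmem : SPerm y β ∈ ({y, α, β} : Finset Q) := by
          rw [huniv]; exact Finset.mem_univ _
        simp only [Finset.mem_insert, Finset.mem_singleton] at hmem
        rcases hmem with e | e | e
        · exact absurd ((SPerm y).injective (e.trans hSy.symm)) hβy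
        · exact e
        · exact absurd ((SPerm y).injective (e.trans hβ.symm)) hβα
      have hswap : SPerm y = Equiv.swap α β := by
        ext z
        have hz : z ∈ ({y, α, β} : Finset Q) := by rw [huniv]; exact Finset.mem_univ _
        simp only [Finset.mem_insert, Finset.mem_singleton] at hz
        rcases hz with rfl | rfl | rfl
        · rw [hSy, Equiv.swap_apply_of_ne_of_ne (Ne.symm hαy) (Ne.symm hβy)]
        · rw [hβ, Equiv.swap_apply_left]
        · rw [hSβ, Equiv.swap_apply_right]
      have hsign : Equiv.Perm.sign (SPerm y) = 1 :=
        Equiv.Perm.mem_alternatingGroup.mp (h ▸ SPerm_mem_Inn y)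
      rw [hswap, Equiv.Perm.sign_swap (Ne.symm hβα)] at hsign
      exact absurd hsign (by decide)
  · -- n ≥ 5
    refine all_SPerm_one_absurd hc hn ?_
    intro y
    ext α
    simp only [Equiv.Perm.coe_one, id_eq]
    by_contra hne'
    obtain ⟨β, hβ⟩ : ∃ b, SPerm y α = b := ⟨_, rfl⟩
    rw [hβ] at hne'
    have hβα : β ≠ α := fun e => hne' e
    have hSy : SPerm y y = y := act_self y
    have hαy : α ≠ y := by rintro rfl; rw [hSy] at hβ; exact hβα hβ.symm
    have hβy : β ≠ y := fun e =>
      hαy ((SPerm y).injective (hβ.trans (e.trans hSy.symm)))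
    -- pick c ≠ d outside {y, α, β}
    have hcard3 : ({y, α, β} : Finset Q).card ≤ 3 := by
      apply le_trans (Finset.card_insert_le _ _)
      apply Nat.succ_le_succ
      apply le_trans (Finset.card_insert_le _ _)
      simp
    have hsd : 1 < (Finset.univ \ ({y, α, β} : Finset Q)).card := by
      rw [Finset.card_sdiff_of_subset (Finset.subset_univ _), Finset.card_univ]
      omega
    obtain ⟨c, hc', d, hd', hcd⟩ := Finset.one_lt_card.mp hsd
    simp only [Finset.mem_sdiff, Finset.mem_univ, true_and, Finset.mem_insert,
      Finset.mem_singleton, not_or] at hc' hd'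
    obtain ⟨hcy, hcα, hcβ⟩ := hc'
    obtain ⟨hdy, hdα, hdβ⟩ := hd'
    have hgA : Equiv.swap β c * Equiv.swap β d ∈ alternatingGroup Q := by
      rw [Equiv.Perm.mem_alternatingGroup, map_mul,
        Equiv.Perm.sign_swap (Ne.symm hcβ), Equiv.Perm.sign_swap (Ne.symm hdβ)]
      decide
    have hgy : (Equiv.swap β c * Equiv.swap β d) y = y := by
      rw [Equiv.Perm.mul_apply, Equiv.swap_apply_of_ne_of_ne (Ne.symm hβy) (Ne.symm hdy),
        Equiv.swap_apply_of_ne_of_ne (Ne.symm hβy) (Ne.symm hcy)]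
    have hgα : (Equiv.swap β c * Equiv.swap β d) α = α := by
      rw [Equiv.Perm.mul_apply, Equiv.swap_apply_of_ne_of_ne (Ne.symm hβα) (Ne.symm hdα),
        Equiv.swap_apply_of_ne_of_ne (Ne.symm hβα) (Ne.symm hcα)]
    have hgβ : (Equiv.swap β c * Equiv.swap β d) β = d := by
      rw [Equiv.Perm.mul_apply, Equiv.swap_apply_left,
        Equiv.swap_apply_of_ne_of_ne hdβ (Ne.symm hcd)]
    have hk := key (Equiv.swap β c * Equiv.swap β d) y hgA hgy α
    rw [hgα, hβ, hgβ] at hk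
    exact hdβ hk
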